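/- arXiv:1104.0268 — 2 statements merged into one kernel-verified Lean document; each statement's English description precedes it below -/
import Mathlib

section
/- Let qᵀ denote the transposed matrix, (qᵀ)_{ij} = q_{ji}. There exists a unique k-algebra isomorphism φ₃ : 𝒰(q) → 𝒰(qᵀ) such that φ₃(K_i) = L_i, φ₃(L_i) = K_i, φ₃(E_i) = F_i, and φ₃(F_i) = E_i for all 1 ≤ i ≤ θ. -/
/-- The generators `E_i, F_i, K_i, K_i⁻, L_i, L_i⁻` of the Drinfeld double `𝒰(q)`. -/
inductive UGen (θ : ℕ) : Type
  | E : Fin θ → UGen θ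
  | F : Fin θ → UGen θ
  | K : Fin θ → UGen θ
  | Kinv : Fin θ → UGen θ
  | L : Fin θ → UGen θ
  | Linv : Fin θ → UGen θ

/-- The toral generators, i.e. those among `K_i, K_i⁻, L_i, L_i⁻`. -/
def UGen.IsToral {θ : ℕ} : UGen θ → Prop
  | .E _ => False
  | .F _ => False
  | _ => True

variable (k : Type*) [Field k] {θ : ℕ}

/-- The image of a generator in the free algebra. -/
noncomputable def Ugen (g : UGen θ) : FreeAlgebra k (UGen θ) := FreeAlgebra.ι k g

/-- The defining relations of the algebra `𝒰(q)`. -/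
inductive URel (q : Fin θ → Fin θ → kˣ) :
    FreeAlgebra k (UGen θ) → FreeAlgebra k (UGen θ) → Prop
  | toral_comm (X Y : UGen θ) (hX : X.IsToral) (hY : Y.IsToral) :
      URel q (Ugen k X * Ugen k Y) (Ugen k Y * Ugen k X)
  | K_Kinv (i : Fin θ) : URel q (Ugen k (.K i) * Ugen k (.Kinv i)) 1
  | Kinv_K (i : Fin θ) : URel q (Ugen k (.Kinv i) * Ugen k (.K i)) 1
  | L_Linv (i : Fin θ) : URel q (Ugen k (.L i) * Ugen k (.Linv i)) 1
  | Linv_L (i : Fin θ) : URel q (Ugen k (.Linv i) * Ugen k (.L i)) 1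
  | K_E (i j : Fin θ) : URel q (Ugen k (.K i) * Ugen k (.E j))
      ((q i j : k) • (Ugen k (.E j) * Ugen k (.K i)))
  | L_E (i j : Fin θ) : URel q (Ugen k (.L i) * Ugen k (.E j))
      ((q j i : k)⁻¹ • (Ugen k (.E j) * Ugen k (.L i)))
  | K_F (i j : Fin θ) : URel q (Ugen k (.K i) * Ugen k (.F j))
      ((q i j : k)⁻¹ • (Ugen k (.F j) * Ugen k (.K i)))
  | L_F (i j : Fin θ) : URel q (Ugen k (.L i) * Ugen k (.F j))
      ((q j i : k) • (Ugen k (.F j) * Ugen k (.L i)))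
  | E_F (i j : Fin θ) : URel q (Ugen k (.E i) * Ugen k (.F j) - Ugen k (.F j) * Ugen k (.E i))
      (if i = j then Ugen k (.K i) - Ugen k (.L i) else 0)

/-- The algebra `𝒰(q)`: the quotient of the free algebra on the generators
`E_i, F_i, K_i, K_i⁻, L_i, L_i⁻` by the defining relations. -/
noncomputable abbrev UqAlgebra (q : Fin θ → Fin θ → kˣ) := RingQuot (URel k q)

variable (q : Fin θ → Fin θ → kˣ)

/-- The generator `E_i` of `𝒰(q)`. -/
noncomputable def UE (i : Fin θ) : UqAlgebra k q := RingQuot.mkAlgHom k (URel k q) (Ugen k (.E i))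
/-- The generator `F_i` of `𝒰(q)`. -/
noncomputable def UF (i : Fin θ) : UqAlgebra k q := RingQuot.mkAlgHom k (URel k q) (Ugen k (.F i))
/-- The generator `K_i` of `𝒰(q)`. -/
noncomputable def UK (i : Fin θ) : UqAlgebra k q := RingQuot.mkAlgHom k (URel k q) (Ugen k (.K i))
/-- The generator `K_i⁻` of `𝒰(q)`. -/
noncomputable def UKinv (i : Fin θ) : UqAlgebra k q :=
  RingQuot.mkAlgHom k (URel k q) (Ugen k (.Kinv i))
/-- The generator `L_i` of `𝒰(q)`. -/
noncomputable def UL (i : Fin θ) : UqAlgebra k q := RingQuot.mkAlgHom k (URel k q) (Ugen k (.L i))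
/-- The generator `L_i⁻` of `𝒰(q)`. -/
noncomputable def ULinv (i : Fin θ) : UqAlgebra k q :=
  RingQuot.mkAlgHom k (URel k q) (Ugen k (.Linv i))


section Phi3Aux

variable {k}

/-- The swap of generators. -/
def UGen.swap {θ : ℕ} : UGen θ → UGen θ
  | .E i => .F i
  | .F i => .E i
  | .K i => .L i
  | .L i => .K i
  | .Kinv i => .Linv i
  | .Linv i => .Kinv i

lemma UGen.swap_swap {θ : ℕ} (g : UGen θ) : g.swap.swap = g := by
  cases g <;> rfl

lemma UGen.isToral_swap {θ : ℕ} {g : UGen θ} (h : g.IsToral) : g.swap.IsToral := by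
  cases g <;> first | exact h.elim | trivial

variable (k)

lemma phi3_resp (q : Fin θ → Fin θ → kˣ) :
    ∀ ⦃a b : FreeAlgebra k (UGen θ)⦄, URel k q a b →
      (FreeAlgebra.lift k
        (fun g : UGen θ =>
          RingQuot.mkAlgHom k (URel k (fun i j => q j i)) (Ugen k g.swap))) a =
      (FreeAlgebra.lift k
        (fun g : UGen θ =>
          RingQuot.mkAlgHom k (URel k (fun i j => q j i)) (Ugen k g.swap))) b := by
  intro a b h
  induction h with
  | toral_comm X Y hX hY =>
    have h := RingQuot.mkAlgHom_rel k
      (URel.toral_comm (q := fun i j => q j i) X.swap Y.swap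
        (UGen.isToral_swap hX) (UGen.isToral_swap hY))
    simp only [map_mul, map_one, map_smul, Ugen, FreeAlgebra.lift_ι_apply, UGen.swap] at h ⊢
    exact h
  | K_Kinv i =>
    have h := RingQuot.mkAlgHom_rel k (URel.L_Linv (q := fun i j => q j i) i)
    simp only [map_mul, map_one, map_smul, Ugen, FreeAlgebra.lift_ι_apply, UGen.swap] at h ⊢
    exact h
  | Kinv_K i =>
    have h := RingQuot.mkAlgHom_rel k (URel.Linv_L (q := fun i j => q j i) i)
    simp only [map_mul, map_one, map_smul, Ugen, FreeAlgebra.lift_ι_apply, UGen.swap] at h ⊢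
    exact h
  | L_Linv i =>
    have h := RingQuot.mkAlgHom_rel k (URel.K_Kinv (q := fun i j => q j i) i)
    simp only [map_mul, map_one, map_smul, Ugen, FreeAlgebra.lift_ι_apply, UGen.swap] at h ⊢
    exact h
  | Linv_L i =>
    have h := RingQuot.mkAlgHom_rel k (URel.Kinv_K (q := fun i j => q j i) i)
    simp only [map_mul, map_one, map_smul, Ugen, FreeAlgebra.lift_ι_apply, UGen.swap] at h ⊢
    exact h
  | K_E i j =>
    have h := RingQuot.mkAlgHom_rel k (URel.L_F (q := fun i j => q j i) i j)
    simp only [map_mul, map_one, map_smul, Ugen, FreeAlgebra.lift_ι_apply, UGen.swap] at h ⊢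
    exact h
  | L_E i j =>
    have h := RingQuot.mkAlgHom_rel k (URel.K_F (q := fun i j => q j i) i j)
    simp only [map_mul, map_one, map_smul, Ugen, FreeAlgebra.lift_ι_apply, UGen.swap] at h ⊢
    exact h
  | K_F i j =>
    have h := RingQuot.mkAlgHom_rel k (URel.L_E (q := fun i j => q j i) i j)
    simp only [map_mul, map_one, map_smul, Ugen, FreeAlgebra.lift_ι_apply, UGen.swap] at h ⊢
    exact h
  | L_F i j =>
    have h := RingQuot.mkAlgHom_rel k (URel.K_E (q := fun i j => q j i) i j)
    simp only [map_mul, map_one, map_smul, Ugen, FreeAlgebra.lift_ι_apply, UGen.swap] at h ⊢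
    exact h
  | E_F i j =>
    have h := RingQuot.mkAlgHom_rel k (URel.E_F (q := fun i j => q j i) j i)
    rcases eq_or_ne i j with rfl | hij
    · simp only [eq_self_iff_true, if_true, if_pos rfl, map_sub, map_mul, Ugen, FreeAlgebra.lift_ι_apply,
        UGen.swap] at h ⊢
      have h2 := congrArg Neg.neg h
      rw [neg_sub, neg_sub] at h2
      exact h2
    · simp only [if_neg hij, if_neg (Ne.symm hij), map_sub, map_mul, map_zero, Ugen,
        FreeAlgebra.lift_ι_apply, UGen.swap] at h ⊢
      rw [sub_eq_zero] at h ⊢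
      exact h.symm

/-- The algebra homomorphism `𝒰(q) → 𝒰(qᵀ)` swapping the generators. -/
noncomputable def phi3Hom (q : Fin θ → Fin θ → kˣ) :
    UqAlgebra k q →ₐ[k] UqAlgebra k (fun i j => q j i) :=
  RingQuot.liftAlgHom k ⟨FreeAlgebra.lift k
    (fun g : UGen θ => RingQuot.mkAlgHom k (URel k (fun i j => q j i)) (Ugen k g.swap)),
    phi3_resp k q⟩

lemma phi3Hom_gen (q : Fin θ → Fin θ → kˣ) (g : UGen θ) :
    phi3Hom k q (RingQuot.mkAlgHom k (URel k q) (Ugen k g)) =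
      RingQuot.mkAlgHom k (URel k (fun i j => q j i)) (Ugen k g.swap) := by
  rw [phi3Hom, RingQuot.liftAlgHom_mkAlgHom_apply, Ugen, FreeAlgebra.lift_ι_apply]

/-- The algebra isomorphism `φ₃ : 𝒰(q) ≃ 𝒰(qᵀ)`. -/
noncomputable def phi3Equiv (q : Fin θ → Fin θ → kˣ) :
    UqAlgebra k q ≃ₐ[k] UqAlgebra k (fun i j => q j i) :=
  AlgEquiv.ofAlgHom (phi3Hom k q) (phi3Hom k (fun i j => q j i))
    (by
      apply RingQuot.ringQuot_ext'
      apply FreeAlgebra.hom_ext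
      funext g
      simp only [Function.comp_apply, AlgHom.coe_comp, AlgHom.coe_id, id_eq]
      show phi3Hom k q (phi3Hom k (fun i j => q j i)
        (RingQuot.mkAlgHom k _ (Ugen k g))) = RingQuot.mkAlgHom k _ (Ugen k g)
      rw [phi3Hom_gen, phi3Hom_gen, UGen.swap_swap])
    (by
      apply RingQuot.ringQuot_ext'
      apply FreeAlgebra.hom_ext
      funext g
      simp only [Function.comp_apply, AlgHom.coe_comp, AlgHom.coe_id, id_eq]
      show phi3Hom k (fun i j => q j i) (phi3Hom k q
        (RingQuot.mkAlgHom k _ (Ugen k g))) = RingQuot.mkAlgHom k _ (Ugen k g)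
      rw [phi3Hom_gen, phi3Hom_gen, UGen.swap_swap])

lemma UK_mul_UKinv (q : Fin θ → Fin θ → kˣ) (i : Fin θ) : UK k q i * UKinv k q i = 1 := by
  have h := RingQuot.mkAlgHom_rel k (URel.K_Kinv (q := q) i)
  rw [map_mul, map_one] at h
  exact h

lemma UKinv_mul_UK (q : Fin θ → Fin θ → kˣ) (i : Fin θ) : UKinv k q i * UK k q i = 1 := by
  have h := RingQuot.mkAlgHom_rel k (URel.Kinv_K (q := q) i)
  rw [map_mul, map_one] at h
  exact h

lemma UL_mul_ULinv (q : Fin θ → Fin θ → kˣ) (i : Fin θ) : UL k q i * ULinv k q i = 1 := by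
  have h := RingQuot.mkAlgHom_rel k (URel.L_Linv (q := q) i)
  rw [map_mul, map_one] at h
  exact h

lemma ULinv_mul_UL (q : Fin θ → Fin θ → kˣ) (i : Fin θ) : ULinv k q i * UL k q i = 1 := by
  have h := RingQuot.mkAlgHom_rel k (URel.Linv_L (q := q) i)
  rw [map_mul, map_one] at h
  exact h

end Phi3Aux

lemma phi3Equiv_apply (q : Fin θ → Fin θ → kˣ) (x : UqAlgebra k q) :
    phi3Equiv k q x = phi3Hom k q x := rfl

lemma phi3Equiv_gen (q : Fin θ → Fin θ → kˣ) (g : UGen θ) :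
    phi3Equiv k q (RingQuot.mkAlgHom k (URel k q) (Ugen k g)) =
      RingQuot.mkAlgHom k (URel k (fun i j => q j i)) (Ugen k g.swap) := by
  rw [phi3Equiv_apply, phi3Hom_gen]

/-- There is a unique algebra isomorphism `φ₃ : 𝒰(q) → 𝒰(qᵀ)` with `φ₃(K_i) = L_i`,
`φ₃(L_i) = K_i`, `φ₃(E_i) = F_i` and `φ₃(F_i) = E_i`, where `(qᵀ)_{ij} = q_{ji}`. -/
theorem UqAlgebra_phi3 :
    ∃! φ : UqAlgebra k q ≃ₐ[k] UqAlgebra k (fun i j => q j i),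
      ∀ i : Fin θ,
        φ (UK k q i) = UL k (fun i j => q j i) i ∧
        φ (UL k q i) = UK k (fun i j => q j i) i ∧
        φ (UE k q i) = UF k (fun i j => q j i) i ∧
        φ (UF k q i) = UE k (fun i j => q j i) i := by
  refine ⟨phi3Equiv k q, fun i => ⟨phi3Equiv_gen k q (.K i), phi3Equiv_gen k q (.L i),
    phi3Equiv_gen k q (.E i), phi3Equiv_gen k q (.F i)⟩, fun φ hφ => ?_⟩
  have key : φ.toAlgHom = (phi3Equiv k q).toAlgHom := by
    apply RingQuot.ringQuot_ext'
    apply FreeAlgebra.hom_ext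
    funext g
    simp only [Function.comp_apply, AlgHom.coe_comp, AlgEquiv.toAlgHom_eq_coe, AlgHom.coe_coe]
    rw [show (RingQuot.mkAlgHom k (URel k q)) (FreeAlgebra.ι k g) =
      RingQuot.mkAlgHom k (URel k q) (Ugen k g) from rfl]
    refine Eq.trans ?_ (phi3Equiv_gen k q g).symm
    cases g with
    | E i => exact (hφ i).2.2.1
    | F i => exact (hφ i).2.2.2
    | K i => exact (hφ i).1
    | L i => exact (hφ i).2.1
    | Kinv i =>
      have h1 : UL k (fun i j => q j i) i * φ (UKinv k q i) = 1 := by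
        rw [← (hφ i).1, ← map_mul, UK_mul_UKinv, map_one]
      exact (left_inv_eq_right_inv (ULinv_mul_UL k (fun i j => q j i) i) h1).symm
    | Linv i =>
      have h1 : UK k (fun i j => q j i) i * φ (ULinv k q i) = 1 := by
        rw [← (hφ i).2.1, ← map_mul, UL_mul_ULinv, map_one]
      exact (left_inv_eq_right_inv (UKinv_mul_UK k (fun i j => q j i) i) h1).symm
  exact AlgEquiv.ext fun x => AlgHom.congr_fun key x
end

section
/- Fix p ≠ i in {1, …, θ} and define recursively in 𝒰(q): E⁺_{i,0} := E_i and E⁺_{i,m+1} := E_p·E⁺_{i,m} − q_{pp}^m q_{pi}·E⁺_{i,m}·E_p (so that E⁺_{i,m} = (ad_c E_p)^m(E_i)). Then for every m ≥ 1 the following identity holds in 𝒰(q): E⁺_{i,m}·F_p − F_p·E⁺_{i,m} = (m)_{q_{pp}}·(q_{pp}^{m−1} q_{pi} q_{ip} − 1)·L_p·E⁺_{i,m−1}, where (m)_t := 1 + t + t² + ⋯ + t^{m−1} for t ∈ k. -/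
variable (k : Type*) [Field k] {θ : ℕ}

variable (q : Fin θ → Fin θ → kˣ)

/-- The iterated braided adjoint `E⁺_{i,m} = (ad_c E_p)^m(E_i)` in `𝒰(q)`:
`E⁺_{i,0} = E_i` and `E⁺_{i,m+1} = E_p·E⁺_{i,m} − q_{pp}^m q_{pi}·E⁺_{i,m}·E_p`. -/
noncomputable def UEad (q : Fin θ → Fin θ → kˣ) (p i : Fin θ) : ℕ → UqAlgebra k q
  | 0 => UE k q i
  | m + 1 => UE k q p * UEad q p i m -
      ((q p p : k) ^ m * (q p i : k)) • (UEad q p i m * UE k q p)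

lemma UK_UE (a b : Fin θ) : UK k q a * UE k q b = (q a b : k) • (UE k q b * UK k q a) := by
  have h := RingQuot.mkAlgHom_rel k (URel.K_E (k := k) (q := q) a b)
  simpa [UK, UE, map_mul, map_smul] using h

lemma UL_UE (a b : Fin θ) : UL k q a * UE k q b = (q b a : k)⁻¹ • (UE k q b * UL k q a) := by
  have h := RingQuot.mkAlgHom_rel k (URel.L_E (k := k) (q := q) a b)
  simpa [UL, UE, map_mul, map_smul] using h

lemma UE_UF (a b : Fin θ) : UE k q a * UF k q b - UF k q b * UE k q a =
    if a = b then UK k q a - UL k q a else 0 := by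
  have h := RingQuot.mkAlgHom_rel k (URel.E_F (k := k) (q := q) a b)
  split_ifs with hab <;> simpa [UE, UF, UK, UL, hab, map_mul, map_sub] using h
lemma UK_UEad (p i : Fin θ) (m : ℕ) : UK k q p * UEad k q p i m =
    ((q p p : k) ^ m * (q p i : k)) • (UEad k q p i m * UK k q p) := by
  induction m with
  | zero => simpa [UEad] using UK_UE k q p i
  | succ m ih =>
      show UK k q p * (UE k q p * UEad k q p i m -
          ((q p p : k) ^ m * (q p i : k)) • (UEad k q p i m * UE k q p)) =
        ((q p p : k) ^ (m+1) * (q p i : k)) •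
          ((UE k q p * UEad k q p i m -
            ((q p p : k) ^ m * (q p i : k)) • (UEad k q p i m * UE k q p)) * UK k q p)
      rw [mul_sub, mul_smul_comm, ← mul_assoc, ← mul_assoc, UK_UE k q p p,
        smul_mul_assoc, mul_assoc, ih, smul_mul_assoc, mul_assoc, UK_UE k q p p]
      simp only [sub_mul, smul_mul_assoc, mul_assoc, smul_sub, smul_smul, mul_smul_comm, pow_succ]
      match_scalars <;> ring
lemma UE_UL (a b : Fin θ) : UE k q b * UL k q a = (q b a : k) • (UL k q a * UE k q b) := by
  rw [UL_UE, smul_smul, mul_inv_cancel₀ (Units.ne_zero _), one_smul]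

lemma UEad_UL (p i : Fin θ) (m : ℕ) : UEad k q p i m * UL k q p =
    ((q p p : k) ^ m * (q i p : k)) • (UL k q p * UEad k q p i m) := by
  induction m with
  | zero => simpa [UEad] using UE_UL k q p i
  | succ m ih =>
      show (UE k q p * UEad k q p i m -
          ((q p p : k) ^ m * (q p i : k)) • (UEad k q p i m * UE k q p)) * UL k q p =
        ((q p p : k) ^ (m+1) * (q i p : k)) •
          (UL k q p * (UE k q p * UEad k q p i m -
            ((q p p : k) ^ m * (q p i : k)) • (UEad k q p i m * UE k q p)))
      rw [sub_mul, mul_assoc, ih, smul_mul_assoc, mul_assoc, UE_UL k q p p]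
      simp only [mul_sub, smul_sub, mul_smul_comm, smul_mul_assoc, smul_smul, mul_assoc, pow_succ]
      rw [← mul_assoc (UE k q p), UE_UL k q p p, ← mul_assoc (UEad k q p i m), ih]
      simp only [smul_mul_assoc, mul_assoc, smul_smul, mul_smul_comm]
      match_scalars <;> ring

lemma expand_comm (X Y W : UqAlgebra k q) (c : k) :
    (X * Y - c • (Y * X)) * W - W * (X * Y - c • (Y * X)) =
      X * (Y * W - W * Y) + (X * W - W * X) * Y - c • (Y * (X * W - W * X)) -
        c • ((Y * W - W * Y) * X) := by
  simp only [mul_sub, sub_mul, smul_sub, mul_smul_comm, smul_mul_assoc, mul_assoc]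
  abel
/-- For `p ≠ i` and every `m ≥ 1`,
`E⁺_{i,m}·F_p − F_p·E⁺_{i,m} = (m)_{q_{pp}}·(q_{pp}^{m−1} q_{pi} q_{ip} − 1)·L_p·E⁺_{i,m−1}`,
`where `(m)_t = 1 + t + ⋯ + t^{m−1}`. -/
theorem UqAlgebra_UEad_commutator_F (p i : Fin θ) (hpi : p ≠ i) (m : ℕ) :
    UEad k q p i (m + 1) * UF k q p - UF k q p * UEad k q p i (m + 1) =
      ((∑ s ∈ Finset.range (m + 1), (q p p : k) ^ s) *
          ((q p p : k) ^ m * (q p i : k) * (q i p : k) - 1)) •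
        (UL k q p * UEad k q p i m) := by
  induction m with
  | zero =>
      show (UE k q p * UEad k q p i 0 - ((q p p : k) ^ 0 * (q p i : k)) •
            (UEad k q p i 0 * UE k q p)) * UF k q p -
          UF k q p * (UE k q p * UEad k q p i 0 - ((q p p : k) ^ 0 * (q p i : k)) •
            (UEad k q p i 0 * UE k q p)) = _
      rw [expand_comm]
      show UE k q p * (UE k q i * UF k q p - UF k q p * UE k q i) +
          (UE k q p * UF k q p - UF k q p * UE k q p) * UE k q i -
          ((q p p : k) ^ 0 * (q p i : k)) •
            (UE k q i * (UE k q p * UF k q p - UF k q p * UE k q p)) -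
          ((q p p : k) ^ 0 * (q p i : k)) •
            ((UE k q i * UF k q p - UF k q p * UE k q i) * UE k q p) = _
      rw [UE_UF k q i p, UE_UF k q p p, if_neg (fun h => hpi h.symm), if_pos rfl]
      simp only [pow_zero, one_mul, mul_zero, zero_mul, smul_zero, add_zero, sub_zero,
        zero_add, Finset.sum_range_one]
      rw [sub_mul (UK k q p) (UL k q p), mul_sub (UE k q i), UK_UE k q p i, UE_UL k q p i]
      show _ = (((q p i : k) * (q i p : k) - 1)) • (UL k q p * UE k q i)
      simp only [smul_sub, smul_smul]
      match_scalars <;> ring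
  | succ m ih =>
      have hgeom : (∑ s ∈ Finset.range (m + 1), (q p p : k) ^ s) * ((q p p : k) - 1) =
          (q p p : k) ^ (m + 1) - 1 := geom_sum_mul _ _
      show (UE k q p * UEad k q p i (m+1) - ((q p p : k) ^ (m+1) * (q p i : k)) •
            (UEad k q p i (m+1) * UE k q p)) * UF k q p -
          UF k q p * (UE k q p * UEad k q p i (m+1) - ((q p p : k) ^ (m+1) * (q p i : k)) •
            (UEad k q p i (m+1) * UE k q p)) = _
      rw [expand_comm, ih, UE_UF k q p p, if_pos rfl]
      rw [sub_mul (UK k q p) (UL k q p), UK_UEad k q p i (m+1),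
        mul_sub (UEad k q p i (m+1)), UEad_UL k q p i (m+1)]
      rw [mul_smul_comm _ (UE k q p), ← mul_assoc (UE k q p) (UL k q p), UE_UL k q p p]
      have hB : UL k q p * UEad k q p i (m + 1) =
          UL k q p * (UE k q p * UEad k q p i m) - ((q p p : k) ^ m * (q p i : k)) •
            (UL k q p * (UEad k q p i m * UE k q p)) := by
        show UL k q p * (UE k q p * UEad k q p i m - ((q p p : k) ^ m * (q p i : k)) •
            (UEad k q p i m * UE k q p)) = _
        rw [mul_sub, mul_smul_comm]
      rw [hB, Finset.sum_range_succ (fun s => (q p p : k) ^ s) (m + 1)]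
      simp only [smul_sub, smul_smul, smul_mul_assoc, mul_smul_comm, mul_assoc, pow_succ]
      match_scalars <;>
        first
          | ring1
          | linear_combination hgeom
          | linear_combination -hgeom
          | linear_combination ((q p p : k) ^ m * (q p i : k)) * hgeom
end
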